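/- Gurland's inequality: for every integer m ≥ 1, Γ((m+1)/2)/Γ(m/2) < m/√(2m+1). -/

import Mathlib

open Filter Real Finset Topology
open scoped Nat

namespace GurlandAux

noncomputable def p (k : ℕ) : ℝ := Real.Wallis.W k * ((4 * k + 2) / (4 * k + 1))
noncomputable def q (k : ℕ) : ℝ := Real.Wallis.W k * ((4 * k + 3) / (4 * k + 2))

lemma p_step (k : ℕ) : p (k + 1) < p k := by
  have hw := Real.Wallis.W_pos k
  unfold p
  rw [Real.Wallis.W_succ]
  set x := (k : ℝ) with hx
  have hx0 : (0 : ℝ) ≤ x := Nat.cast_nonneg k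
  push_cast
  have key : (2 * x + 2) / (2 * x + 1) * ((2 * x + 2) / (2 * x + 3)) *
      ((4 * (x + 1) + 2) / (4 * (x + 1) + 1)) < (4 * x + 2) / (4 * x + 1) := by
    rw [div_mul_div_comm, div_mul_div_comm, div_lt_div_iff₀ (by positivity) (by positivity)]
    nlinarith [sq_nonneg x, hx0]
  calc Real.Wallis.W k * ((2 * x + 2) / (2 * x + 1) * ((2 * x + 2) / (2 * x + 3))) *
        ((4 * (x + 1) + 2) / (4 * (x + 1) + 1))
      = Real.Wallis.W k * ((2 * x + 2) / (2 * x + 1) * ((2 * x + 2) / (2 * x + 3)) *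
        ((4 * (x + 1) + 2) / (4 * (x + 1) + 1))) := by ring
    _ < Real.Wallis.W k * ((4 * x + 2) / (4 * x + 1)) := by
        exact mul_lt_mul_of_pos_left key hw

lemma q_step (k : ℕ) : q k < q (k + 1) := by
  have hw := Real.Wallis.W_pos k
  unfold q
  rw [Real.Wallis.W_succ]
  set x := (k : ℝ) with hx
  have hx0 : (0 : ℝ) ≤ x := Nat.cast_nonneg k
  push_cast
  have key : (4 * x + 3) / (4 * x + 2) < (2 * x + 2) / (2 * x + 1) * ((2 * x + 2) / (2 * x + 3)) *
      ((4 * (x + 1) + 3) / (4 * (x + 1) + 2)) := by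
    rw [div_mul_div_comm, div_mul_div_comm, div_lt_div_iff₀ (by positivity) (by positivity)]
    nlinarith [sq_nonneg x, hx0]
  calc Real.Wallis.W k * ((4 * x + 3) / (4 * x + 2))
      < Real.Wallis.W k * ((2 * x + 2) / (2 * x + 1) * ((2 * x + 2) / (2 * x + 3)) *
        ((4 * (x + 1) + 3) / (4 * (x + 1) + 2))) := mul_lt_mul_of_pos_left key hw
    _ = Real.Wallis.W k * ((2 * x + 2) / (2 * x + 1) * ((2 * x + 2) / (2 * x + 3))) *
        ((4 * (x + 1) + 3) / (4 * (x + 1) + 2)) := by ring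

lemma tendsto_aux (b : ℝ) (hb : 0 < b) :
    Tendsto (fun k : ℕ => ((4 * k + b + 1) / (4 * k + b) : ℝ)) atTop (𝓝 1) := by
  have h1 : Tendsto (fun k : ℕ => (4 * k + b : ℝ)) atTop atTop := by
    apply tendsto_atTop_add_const_right
    exact (tendsto_natCast_atTop_atTop (R := ℝ)).const_mul_atTop (by norm_num)
  have h2 : Tendsto (fun k : ℕ => (1 + 1 / (4 * k + b) : ℝ)) atTop (𝓝 (1 + 0)) :=
    tendsto_const_nhds.add (Tendsto.div_atTop tendsto_const_nhds h1)
  rw [add_zero] at h2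
  refine h2.congr' ?_
  filter_upwards [eventually_ge_atTop 0] with k _
  have hk : (0:ℝ) < 4 * k + b := by positivity
  field_simp

lemma p_tendsto : Tendsto p atTop (𝓝 (π / 2)) := by
  have h := (Real.Wallis.tendsto_W_nhds_pi_div_two).mul (tendsto_aux 1 one_pos)
  rw [mul_one] at h
  refine h.congr fun k => ?_
  simp only [p]
  ring

lemma q_tendsto : Tendsto q atTop (𝓝 (π / 2)) := by
  have h := (Real.Wallis.tendsto_W_nhds_pi_div_two).mul (tendsto_aux 2 two_pos)
  rw [mul_one] at h
  refine h.congr fun k => ?_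
  simp only [q]
  ring

lemma p_gt (k : ℕ) : π / 2 < p k := by
  have hanti : Antitone p := antitone_nat_of_succ_le fun n => (p_step n).le
  calc π / 2 ≤ p (k + 1) := hanti.le_of_tendsto p_tendsto (k + 1)
    _ < p k := p_step k

lemma q_lt (k : ℕ) : q k < π / 2 := by
  have hmono : Monotone q := monotone_nat_of_le_succ fun n => (q_step n).le
  calc q k < q (k + 1) := q_step k
    _ ≤ π / 2 := hmono.ge_of_tendsto q_tendsto (k + 1)

/-- Lower Wallis bound. -/
lemma W_lower (k : ℕ) : π * (4 * k + 1) < 4 * Real.Wallis.W k * (2 * k + 1) := by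
  have h := p_gt k
  unfold p at h
  rw [← mul_div_assoc, lt_div_iff₀ (by positivity)] at h
  nlinarith
  
/-- Upper Wallis bound. -/
lemma W_upper (k : ℕ) : Real.Wallis.W k * (4 * k + 3) < π * (2 * k + 1) := by
  have h := q_lt k
  unfold q at h
  rw [← mul_div_assoc, div_lt_iff₀ (by positivity)] at h
  nlinarith

lemma Gamma_nat_add_half (k : ℕ) :
    Real.Gamma ((k : ℝ) + 1 / 2) = Real.sqrt π * (2 * k)! / (4 ^ k * k !) := by
  induction k with
  | zero => norm_num [show ((0:ℕ):ℝ) + 1/2 = 1/2 by norm_num, Real.Gamma_one_half_eq]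
  | succ k ih =>
    have h1 : ((k + 1 : ℕ) : ℝ) + 1 / 2 = ((k : ℝ) + 1 / 2) + 1 := by push_cast; ring
    have h2 : (0 : ℝ) < (k : ℝ) + 1 / 2 := by positivity
    rw [h1, Real.Gamma_add_one (ne_of_gt h2), ih]
    have h3 : 2 * (k + 1) = (2 * k + 1) + 1 := by ring
    rw [h3, Nat.factorial_succ, Nat.factorial_succ, Nat.factorial_succ]
    have h4 : (0:ℝ) < 4 ^ k * (k)! := by positivity
    field_simp
    push_cast
    ring

end GurlandAux

open GurlandAux in
/-- Gurland's inequality. -/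
theorem gurland_gamma_ratio (m : ℕ) (hm : 1 ≤ m) :
    Real.Gamma (((m : ℝ) + 1) / 2) / Real.Gamma ((m : ℝ) / 2)
      < (m : ℝ) / Real.sqrt (2 * (m : ℝ) + 1) := by
  have hW := Real.Wallis.W_eq_factorial_ratio
  rcases Nat.even_or_odd m with ⟨k, hk⟩ | ⟨k, hk⟩
  · -- m = 2k, k ≥ 1
    have hk1 : 1 ≤ k := by omega
    have hm2 : (m : ℝ) = 2 * k := by rw [hk]; push_cast; ring
    have e1 : ((m : ℝ) + 1) / 2 = (k : ℝ) + 1 / 2 := by rw [hm2]; ring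
    have e2 : (m : ℝ) / 2 = ((k - 1 : ℕ) : ℝ) + 1 := by
      rw [hm2, Nat.cast_sub hk1]; push_cast; ring
    have e3 : Real.Gamma ((m : ℝ) / 2) = ((k - 1)! : ℝ) := by
      rw [e2, Real.Gamma_nat_eq_factorial]
    rw [e1, e3, GurlandAux.Gamma_nat_add_half, hm2]
    have e4 : 2 * (2 * (k : ℝ)) + 1 = 4 * k + 1 := by ring
    rw [e4]
    set x := (k : ℝ) with hxdef
    have hx1 : (1 : ℝ) ≤ x := by rw [hxdef]; exact_mod_cast hk1
    set w := Real.Wallis.W k with hwdef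
    set F := ((2 * k)! : ℝ) with hFdef
    set A := (4 : ℝ) ^ k with hAdef
    set K := (k ! : ℝ) with hKdef
    set D := ((k - 1)! : ℝ) with hDdef
    have hw : 0 < w := Real.Wallis.W_pos k
    have hF : 0 < F := by rw [hFdef]; exact Nat.cast_pos.mpr (Nat.factorial_pos _)
    have hA : (0 : ℝ) < A := by positivity
    have hK : 0 < K := by rw [hKdef]; exact Nat.cast_pos.mpr (Nat.factorial_pos _)
    have hD : 0 < D := by rw [hDdef]; exact Nat.cast_pos.mpr (Nat.factorial_pos _)
    have hKD : K = x * D := by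
      rw [hKdef, hDdef, hxdef]
      exact_mod_cast (Nat.mul_factorial_pred (by omega)).symm
    have hA2 : (2 : ℝ) ^ (4 * k) = A ^ 2 := by
      rw [hAdef, show (4:ℝ) = 2 ^ 2 by norm_num, ← pow_mul, ← pow_mul,
        show 2 * (k * 2) = 4 * k by ring]
    have hF2 : w * (2 * x + 1) * F ^ 2 = A ^ 2 * K ^ 4 := by
      have h := hW k
      rw [hA2] at h
      rw [hwdef, h]
      field_simp
      ring
    apply lt_of_pow_lt_pow_left₀ 2 (by positivity)
    simp only [div_pow, mul_pow]
    rw [Real.sq_sqrt (le_of_lt Real.pi_pos), Real.sq_sqrt (by positivity : (0:ℝ) ≤ 4 * x + 1),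
      div_div, div_lt_div_iff₀ (by positivity) (by positivity)]
    have h1 : Real.pi * (4 * x + 1) * F ^ 2 < 4 * w * (2 * x + 1) * F ^ 2 :=
      mul_lt_mul_of_pos_right (W_lower k) (by positivity)
    have h5 : A ^ 2 * K ^ 4 = x ^ 2 * (A ^ 2 * K ^ 2 * D ^ 2) := by
      have : K ^ 4 = K ^ 2 * K ^ 2 := by ring
      rw [this, hKD]; ring
    nlinarith [h1, hF2, h5]
  · -- m = 2k+1
    have hm2 : (m : ℝ) = 2 * k + 1 := by rw [hk]; push_cast; ring
    have e1 : ((m : ℝ) + 1) / 2 = (k : ℝ) + 1 := by rw [hm2]; ring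
    have e2 : (m : ℝ) / 2 = (k : ℝ) + 1 / 2 := by rw [hm2]; ring
    have e3 : Real.Gamma (((m : ℝ) + 1) / 2) = (k ! : ℝ) := by
      rw [e1, Real.Gamma_nat_eq_factorial]
    rw [e3, e2, GurlandAux.Gamma_nat_add_half, hm2]
    have e4 : 2 * (2 * (k : ℝ) + 1) + 1 = 4 * k + 3 := by ring
    rw [e4]
    set x := (k : ℝ) with hxdef
    set w := Real.Wallis.W k with hwdef
    set F := ((2 * k)! : ℝ) with hFdef
    set A := (4 : ℝ) ^ k with hAdef
    set K := (k ! : ℝ) with hKdef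
    have hw : 0 < w := Real.Wallis.W_pos k
    have hF : 0 < F := by rw [hFdef]; exact Nat.cast_pos.mpr (Nat.factorial_pos _)
    have hA : (0 : ℝ) < A := by positivity
    have hK : 0 < K := by rw [hKdef]; exact Nat.cast_pos.mpr (Nat.factorial_pos _)
    have hx0 : (0 : ℝ) ≤ x := Nat.cast_nonneg k
    have hA2 : (2 : ℝ) ^ (4 * k) = A ^ 2 := by
      rw [hAdef, show (4:ℝ) = 2 ^ 2 by norm_num, ← pow_mul, ← pow_mul,
        show 2 * (k * 2) = 4 * k by ring]
    have hF2 : w * (2 * x + 1) * F ^ 2 = A ^ 2 * K ^ 4 := by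
      have h := hW k
      rw [hA2] at h
      rw [hwdef, h]
      field_simp
      ring
    rw [div_div_eq_mul_div]
    apply lt_of_pow_lt_pow_left₀ 2 (by positivity)
    simp only [div_pow, mul_pow]
    rw [Real.sq_sqrt (le_of_lt Real.pi_pos), Real.sq_sqrt (by positivity : (0:ℝ) ≤ 4 * x + 3),
      div_lt_div_iff₀ (by positivity) (by positivity)]
    have h1 : w * (4 * x + 3) * ((2 * x + 1) * F ^ 2) <
        Real.pi * (2 * x + 1) * ((2 * x + 1) * F ^ 2) :=
      mul_lt_mul_of_pos_right (W_upper k) (by positivity)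
    nlinarith [h1, hF2]
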